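/- Every strong quasi-transitive digraph is a semicomplete composition: if D is a strong quasi-transitive digraph with at least two vertices, then D = T[H_1, ..., H_t] for some semicomplete digraph T on t ≥ 2 vertices and digraphs H_1, ..., H_t, where each H_i is either a single vertex or a non-strong quasi-transitive digraph. -/

import Mathlib

variable {V : Type*}

/-- A digraph (given by its arc relation) is strongly connected. -/
def Strong (A : V → V → Prop) : Prop :=
  ∀ x y : V, Relation.ReflTransGen A x y

/-- `B` is an out-branching of the digraph `A` rooted at `r`:
a spanning subdigraph in which every vertex is reachable from `r`,
every vertex other than `r` has in-degree exactly one, and `r` has in-degree zero. -/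
def IsOutBranching (A B : V → V → Prop) (r : V) : Prop :=
  (∀ x y, B x y → A x y) ∧
  (∀ v, Relation.ReflTransGen B r v) ∧
  (∀ v, v ≠ r → Nat.card {u : V // B u v} = 1) ∧
  (∀ u, ¬ B u r)

/-- `B` is an in-branching of the digraph `A` rooted at `r`. -/
def IsInBranching (A B : V → V → Prop) (r : V) : Prop :=
  (∀ x y, B x y → A x y) ∧
  (∀ v, Relation.ReflTransGen B v r) ∧
  (∀ v, v ≠ r → Nat.card {u : V // B v u} = 1) ∧
  (∀ u, ¬ B r u)

/-- A good pair rooted at `r`: arc-disjoint out- and in-branchings rooted at `r`. -/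
def GoodPair (A : V → V → Prop) (r : V) : Prop :=
  ∃ Bp Bm : V → V → Prop, IsOutBranching A Bp r ∧ IsInBranching A Bm r ∧
    ∀ x y, ¬ (Bp x y ∧ Bm x y)

/-- Arc relation of the composition `T[H_1, …, H_t]`. -/
def CompArc {t : ℕ} (T : Fin t → Fin t → Prop) (n : Fin t → ℕ)
    (H : ∀ i : Fin t, Fin (n i) → Fin (n i) → Prop)
    (x y : (i : Fin t) × Fin (n i)) : Prop :=
  (∃ h : x.1 = y.1, H y.1 (h ▸ x.2) y.2) ∨ (x.1 ≠ y.1 ∧ T x.1 y.1)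

/-- A semicomplete digraph: some arc between every pair of distinct vertices. -/
def Semicomplete {α : Type*} (T : α → α → Prop) : Prop :=
  ∀ x y : α, x ≠ y → T x y ∨ T y x

/-- A quasi-transitive digraph. -/
def QuasiTransitive (D : V → V → Prop) : Prop :=
  ∀ x y z : V, x ≠ z → D x y → D y z → D x z ∨ D z x



/-- A walk of length `n` from `x` to `y` in the digraph `R`. -/
def Walk (R : V → V → Prop) (x y : V) (n : ℕ) : Prop :=
  ∃ w : ℕ → V, w 0 = x ∧ w n = y ∧ ∀ i < n, R (w i) (w (i + 1))

lemma walk_refl (R : V → V → Prop) (x : V) : Walk R x x 0 :=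
  ⟨fun _ => x, rfl, rfl, fun i hi => absurd hi (Nat.not_lt_zero i)⟩

lemma walk_tail {R : V → V → Prop} {x c y : V} {n : ℕ}
    (h : Walk R x c n) (hc : R c y) : Walk R x y (n + 1) := by
  obtain ⟨w, h0, hn, harc⟩ := h
  refine ⟨fun k => if k ≤ n then w k else y, ?_, ?_, ?_⟩
  · dsimp only; rw [if_pos (Nat.zero_le n)]; exact h0
  · dsimp only; rw [if_neg (by omega)]
  · intro i hi
    by_cases h1 : i + 1 ≤ n
    · dsimp only; rw [if_pos (by omega), if_pos h1]
      exact harc i (by omega)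
    · have hin : i = n := by omega
      subst hin
      dsimp only; rw [if_pos le_rfl, if_neg h1, hn]
      exact hc

lemma rtg_to_walk {R : V → V → Prop} {x y : V}
    (h : Relation.ReflTransGen R x y) : ∃ n, Walk R x y n := by
  induction h with
  | refl => exact ⟨0, walk_refl R x⟩
  | tail _ hc ih => obtain ⟨n, hw⟩ := ih; exact ⟨n + 1, walk_tail hw hc⟩

lemma walk_to_rtg {R : V → V → Prop} :
    ∀ {n : ℕ} {x y : V}, Walk R x y n → Relation.ReflTransGen R x y := by
  intro n
  induction n with
  | zero => rintro x y ⟨w, h0, hn, -⟩; rw [← h0, ← hn]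
  | succ m ih =>
    rintro x y ⟨w, h0, hn, harc⟩
    have h1 : Walk R x (w m) m := ⟨w, h0, rfl, fun i hi => harc i (Nat.lt_succ_of_lt hi)⟩
    exact (ih h1).tail (hn ▸ harc m (Nat.lt_succ_self m))

lemma walk_splice_eq {R : V → V → Prop} {x y : V} {n : ℕ}
    (w : ℕ → V) (h0 : w 0 = x) (hn : w n = y) (harc : ∀ i < n, R (w i) (w (i + 1)))
    {i j : ℕ} (hij : i < j) (hjn : j ≤ n) (heq : w i = w j) :
    Walk R x y (n - (j - i)) := by
  set d := j - i with hd
  refine ⟨fun k => if k ≤ i then w k else w (k + d), ?_, ?_, ?_⟩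
  · dsimp only; rw [if_pos (Nat.zero_le i)]; exact h0
  · by_cases hni : n - d ≤ i
    · have hieq : n - d = i := by omega
      have hjeq : j = n := by omega
      dsimp only; rw [if_pos hni, hieq, heq, hjeq, hn]
    · dsimp only; rw [if_neg hni]
      have : n - d + d = n := by omega
      rw [this, hn]
  · intro k hk
    by_cases hki : k + 1 ≤ i
    · dsimp only; rw [if_pos (by omega : k ≤ i), if_pos hki]
      exact harc k (by omega)
    · by_cases hki' : k ≤ i
      · have hke : k = i := by omega
        subst hke
        dsimp only; rw [if_pos le_rfl, if_neg hki, heq]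
        have h2 : k + 1 + d = j + 1 := by omega
        rw [h2]
        exact harc j (by omega)
      · dsimp only; rw [if_neg hki', if_neg (by omega : ¬ k + 1 ≤ i)]
        have h3 : k + 1 + d = k + d + 1 := by omega
        rw [h3]
        exact harc (k + d) (by omega)

lemma walk_splice_arc {R : V → V → Prop} {x y : V} {n : ℕ}
    (w : ℕ → V) (h0 : w 0 = x) (hn : w n = y) (harc : ∀ i < n, R (w i) (w (i + 1)))
    {i j : ℕ} (hij : i + 1 < j) (hjn : j ≤ n) (hchord : R (w i) (w j)) :
    Walk R x y (n - (j - i - 1)) := by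
  set d := j - i - 1 with hd
  refine ⟨fun k => if k ≤ i then w k else w (k + d), ?_, ?_, ?_⟩
  · dsimp only; rw [if_pos (Nat.zero_le i)]; exact h0
  · dsimp only; rw [if_neg (by omega : ¬ n - d ≤ i)]
    have : n - d + d = n := by omega
    rw [this, hn]
  · intro k hk
    by_cases hki : k + 1 ≤ i
    · dsimp only; rw [if_pos (by omega : k ≤ i), if_pos hki]
      exact harc k (by omega)
    · by_cases hki' : k ≤ i
      · have hke : k = i := by omega
        subst hke
        dsimp only; rw [if_pos le_rfl, if_neg hki]
        have h2 : k + 1 + d = j := by omega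
        rw [h2]
        exact hchord
      · dsimp only; rw [if_neg hki', if_neg (by omega : ¬ k + 1 ≤ i)]
        have h3 : k + 1 + d = k + d + 1 := by omega
        rw [h3]
        exact harc (k + d) (by omega)

/-- Nonadjacency relation. -/
def Nonadj (D : V → V → Prop) (a b : V) : Prop := a ≠ b ∧ ¬ D a b ∧ ¬ D b a

lemma nonadj_symm {D : V → V → Prop} : Symmetric (Nonadj D) :=
  fun _ _ h => ⟨h.1.symm, h.2.2, h.2.1⟩

/-- Structure lemma: in a quasi-transitive digraph, if `x, y` are nonadjacent
and `y` is reachable from `x`, then there are `s, t` with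
`x→s→t→y`, `y→s`, `t→x`. -/
lemma struct_lemma {D : V → V → Prop} (hqt : QuasiTransitive D) {x y : V}
    (hxy : Nonadj D x y) (hr : Relation.ReflTransGen D x y) :
    ∃ s t : V, D x s ∧ D s t ∧ D t y ∧ D y s ∧ D t x := by
  classical
  obtain ⟨hne, hDxy, hDyx⟩ := hxy
  have hex : ∃ n, Walk D x y n := rtg_to_walk hr
  obtain ⟨N, ⟨w, h0, hN, harc⟩, hmin⟩ :
      ∃ N, Walk D x y N ∧ ∀ m, m < N → ¬ Walk D x y m :=
    ⟨Nat.find hex, Nat.find_spec hex, fun m hm => Nat.find_min hex hm⟩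
  have hNpos : 0 < N := by
    rcases Nat.eq_zero_or_pos N with h | h
    · subst h; exact absurd (h0 ▸ hN : x = y).symm (Ne.symm hne)
    · exact h
  have F1 : ∀ i j, i < j → j ≤ N → w i ≠ w j := by
    intro i j hij hjn heq
    exact hmin (N - (j - i)) (by omega) (walk_splice_eq w h0 hN harc hij hjn heq)
  have F2 : ∀ i j, i + 1 < j → j ≤ N → ¬ D (w i) (w j) := by
    intro i j hij hjn hD
    exact hmin (N - (j - i - 1)) (by omega) (walk_splice_arc w h0 hN harc hij hjn hD)
  have back : ∀ i, i + 2 ≤ N → D (w (i + 2)) (w i) := by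
    intro i hi
    rcases hqt (w i) (w (i + 1)) (w (i + 2)) (F1 i (i + 2) (by omega) hi)
      (harc i (by omega)) (harc (i + 1) (by omega)) with h | h
    · exact absurd h (F2 i (i + 2) (by omega) hi)
    · exact h
  have hN3 : 3 ≤ N := by
    by_contra hlt
    have h3 : N = 1 ∨ N = 2 := by omega
    rcases h3 with h | h <;> subst h
    · have h01 := harc 0 (by omega)
      rw [h0] at h01; rw [hN] at h01
      exact hDxy h01
    · have h01 := harc 0 (by omega)
      have h12 := harc 1 (by omega)
      rw [h0] at h01
      rw [show (1 : ℕ) + 1 = 2 from rfl, hN] at h12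
      rcases hqt x (w 1) y hne h01 h12 with h | h
      · exact hDxy h
      · exact hDyx h
  have hNeq : N = 3 := by
    by_contra hN4'
    have hN4 : 4 ≤ N := by omega
    have desc : ∀ j, j + 2 ≤ N → D (w N) (w j) → False := by
      intro j
      induction j using Nat.strong_induction_on with
      | _ j ih =>
        intro hj hD
        match j, hj with
        | 0, _ =>
          rw [hN, h0] at hD
          exact hDyx hD
        | 1, _ =>
          have h2 : D (w N) (w 2) := by
            rcases hqt (w N) (w 1) (w 2) (Ne.symm (F1 2 N (by omega) le_rfl)) hD
              (harc 1 (by omega)) with h | h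
            · exact h
            · exact absurd h (F2 2 N (by omega) le_rfl)
          rcases hqt (w N) (w 2) (w 0) (Ne.symm (F1 0 N (by omega) le_rfl)) h2
            (back 0 (by omega)) with h | h
          · rw [hN, h0] at h; exact hDyx h
          · rw [hN, h0] at h; exact hDxy h
        | (m + 2), _ =>
          have hb : D (w (m + 2)) (w m) := back m (by omega)
          rcases hqt (w N) (w (m + 2)) (w m) (Ne.symm (F1 m N (by omega) le_rfl)) hD hb with
            h | h
          · exact ih m (by omega) (by omega) h
          · rcases Nat.eq_zero_or_pos m with hm | hm
            · subst hm; rw [hN, h0] at h; exact hDxy h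
            · exact (F2 m N (by omega) le_rfl) h
    have hstart : D (w N) (w (N - 2)) := by
      have hb := back (N - 2) (by omega)
      have h2 : N - 2 + 2 = N := by omega
      rwa [h2] at hb
    exact desc (N - 2) (by omega) hstart
  subst hNeq
  have h01 := harc 0 (by omega)
  have h12 := harc 1 (by omega)
  have h23 := harc 2 (by omega)
  rw [h0] at h01
  rw [show (2 : ℕ) + 1 = 3 from rfl, hN] at h23
  refine ⟨w 1, w 2, h01, h12, h23, ?_, ?_⟩
  · rcases hqt (w 1) (w 2) y (by rw [← hN]; exact F1 1 3 (by omega) le_rfl) h12 h23 with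
      h | h
    · refine absurd ?_ (F2 1 3 (by omega) le_rfl)
      rw [hN]; exact h
    · exact h
  · rcases hqt x (w 1) (w 2) (by rw [← h0]; exact F1 0 2 (by omega) (by omega)) h01 h12 with
      h | h
    · refine absurd ?_ (F2 0 2 (by omega) (by omega))
      rw [h0]; exact h
    · exact h

section Bypass

variable {D : V → V → Prop}

lemma side_out (hqt : QuasiTransitive D) {p u w : V}
    (hpu : D p u) (huw : Nonadj D u w) : D p w ∨ Nonadj D p w := by
  obtain ⟨hne, h1, h2⟩ := huw
  have hpw : p ≠ w := fun h => h2 (h ▸ hpu)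
  by_cases hd : D p w
  · exact Or.inl hd
  · by_cases hd2 : D w p
    · rcases hqt w p u (Ne.symm hne) hd2 hpu with h | h
      · exact absurd h h2
      · exact absurd h h1
    · exact Or.inr ⟨hpw, hd, hd2⟩

lemma side_in (hqt : QuasiTransitive D) {q u w : V}
    (huq : D u q) (huw : Nonadj D u w) : D w q ∨ Nonadj D q w := by
  obtain ⟨hne, h1, h2⟩ := huw
  have hqw : q ≠ w := fun h => h1 (h ▸ huq)
  have hnqw : ¬ D q w := by
    intro hd
    rcases hqt u q w hne huq hd with h | h
    · exact h1 h
    · exact h2 h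
  by_cases hd2 : D w q
  · exact Or.inl hd2
  · exact Or.inr ⟨hqw, hnqw, hd2⟩

/-- The digraph induced on the complement of `u`. -/
def Dsub (D : V → V → Prop) (u : V) : {x : V // x ≠ u} → {x : V // x ≠ u} → Prop :=
  fun a b => D a.1 b.1

lemma bypass (hqt : QuasiTransitive D) (hs : Strong D) {u w' : V}
    (hw' : Nonadj D u w') {p q : V} (hp : p ≠ u) (hq : q ≠ u)
    (hpu : D p u) (huq : D u q) :
    Relation.ReflTransGen (Dsub D u) ⟨p, hp⟩ ⟨q, hq⟩ := by
  obtain ⟨hneuw, hDuw, hDwu⟩ := hw'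
  have hwu : w' ≠ u := Ne.symm hneuw
  -- structural paths
  have getpath1 : ∀ (z : V) (hz : z ≠ u), Nonadj D z w' →
      Relation.ReflTransGen (Dsub D u) ⟨z, hz⟩ ⟨w', hwu⟩ := by
    intro z hz hnz
    obtain ⟨s, t, h1, h2, h3, h4, h5⟩ := struct_lemma hqt hnz (hs z w')
    have hsu : s ≠ u := fun h => hDwu (h ▸ h4)
    have htu : t ≠ u := fun h => hDuw (h ▸ h3)
    exact Relation.ReflTransGen.head (b := (⟨s, hsu⟩ : {x : V // x ≠ u})) h1
      (Relation.ReflTransGen.head (b := (⟨t, htu⟩ : {x : V // x ≠ u})) h2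
        (Relation.ReflTransGen.single h3))
  have getpath2 : ∀ (z : V) (hz : z ≠ u), Nonadj D w' z →
      Relation.ReflTransGen (Dsub D u) ⟨w', hwu⟩ ⟨z, hz⟩ := by
    intro z hz hnz
    obtain ⟨s, t, h1, h2, h3, h4, h5⟩ := struct_lemma hqt hnz (hs w' z)
    have hsu : s ≠ u := fun h => hDwu (h ▸ h1)
    have htu : t ≠ u := fun h => hDuw (h ▸ h5)
    exact Relation.ReflTransGen.head (b := (⟨s, hsu⟩ : {x : V // x ≠ u})) h1
      (Relation.ReflTransGen.head (b := (⟨t, htu⟩ : {x : V // x ≠ u})) h2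
        (Relation.ReflTransGen.single h3))
  have hpart1 : Relation.ReflTransGen (Dsub D u) ⟨p, hp⟩ ⟨w', hwu⟩ := by
    rcases side_out hqt hpu ⟨hneuw, hDuw, hDwu⟩ with h | h
    · exact Relation.ReflTransGen.single h
    · exact getpath1 p hp h
  have hpart2 : Relation.ReflTransGen (Dsub D u) ⟨w', hwu⟩ ⟨q, hq⟩ := by
    rcases side_in hqt huq ⟨hneuw, hDuw, hDwu⟩ with h | h
    · exact Relation.ReflTransGen.single h
    · exact getpath2 q hq (nonadj_symm h)
  exact hpart1.trans hpart2

lemma strong_sub (hqt : QuasiTransitive D) (hs : Strong D) {u w' : V}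
    (hw' : Nonadj D u w') : Strong (Dsub D u) := by
  intro a b
  have key : ∀ y : V, Relation.ReflTransGen D a.1 y →
      (∀ hy : y ≠ u, Relation.ReflTransGen (Dsub D u) a ⟨y, hy⟩) ∧
      (y = u → ∃ (p : V) (hp : p ≠ u),
        Relation.ReflTransGen (Dsub D u) a ⟨p, hp⟩ ∧ D p u) := by
    intro y hy
    induction hy with
    | refl =>
      constructor
      · intro hy
        have : (⟨a.1, hy⟩ : {x : V // x ≠ u}) = a := Subtype.ext rfl
        rw [this]
      · intro h; exact absurd h a.2
    | @tail c y hrc hcy ih =>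
      constructor
      · intro hy
        by_cases hc : c = u
        · subst hc
          obtain ⟨p, hp, hrtg, hpu⟩ := ih.2 rfl
          exact hrtg.trans (bypass hqt hs hw' hp hy hpu hcy)
        · exact (ih.1 hc).tail hcy
      · intro hyu
        by_cases hc : c = u
        · exact ih.2 hc
        · exact ⟨c, hc, ih.1 hc, hyu ▸ hcy⟩
  exact (key b.1 (hs a.1 b.1)).1 b.2

end Bypass

section Disconnect

variable {D : V → V → Prop}

lemma walk_sub {R : V → V → Prop} {u : V} {R' : {x : V // x ≠ u} → {x : V // x ≠ u} → Prop}
    (hR : ∀ (a b : V) (ha : a ≠ u) (hb : b ≠ u), R a b → R' ⟨a, ha⟩ ⟨b, hb⟩) :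
    ∀ (n : ℕ) (w : ℕ → V), (∀ i < n, R (w i) (w (i + 1))) →
      ∀ (hvals : ∀ i ≤ n, w i ≠ u),
      Relation.ReflTransGen R' ⟨w 0, hvals 0 (Nat.zero_le n)⟩ ⟨w n, hvals n le_rfl⟩ := by
  intro n
  induction n with
  | zero => intro w _ hvals; exact Relation.ReflTransGen.refl
  | succ m ih =>
    intro w harc hvals
    have h1 := ih w (fun i hi => harc i (by omega)) (fun i hi => hvals i (by omega))
    exact h1.tail (hR (w m) (w (m + 1)) _ _ (harc m (by omega)))

/-- If the nonadjacency graph is connected on at least two vertices, then there is a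
nonadjacent pair `(u, w')` such that removing `u` keeps it connected. -/
lemma reach_avoid [Fintype V]
    (htot : ∀ a b : V, Relation.ReflTransGen (Nonadj D) a b)
    (h2 : 2 ≤ Fintype.card V) :
    ∃ (u w' : V), Nonadj D u w' ∧
      ∀ a b : {x : V // x ≠ u},
        Relation.ReflTransGen (Nonadj (Dsub D u)) a b := by
  classical
  set R := Nonadj D with hR
  have hex : ∀ a b : V, ∃ n, Walk R a b n := fun a b => rtg_to_walk (htot a b)
  set d : V → V → ℕ := fun a b => Nat.find (hex a b) with hd
  have hspec : ∀ a b, Walk R a b (d a b) := fun a b => Nat.find_spec (hex a b)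
  have hmin : ∀ a b m, m < d a b → ¬ Walk R a b m := fun a b m hm => Nat.find_min (hex a b) hm
  have hne : Nonempty V := Fintype.card_pos_iff.mp (by omega : 0 < Fintype.card V)
  obtain ⟨r⟩ := hne
  obtain ⟨u, -, hu⟩ := Finset.exists_max_image (Finset.univ : Finset V) (d r)
    ⟨r, Finset.mem_univ r⟩
  have hu' : ∀ a : V, d r a ≤ d r u := fun a => hu a (Finset.mem_univ a)
  have hdr : ∀ a, a ≠ r → 1 ≤ d r a := by
    intro a ha
    by_contra h
    have h0 : d r a = 0 := by omega
    obtain ⟨w, hw0, hwn, -⟩ := hspec r a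
    rw [h0] at hwn
    exact ha (by rw [← hwn, hw0])
  have hdu : 1 ≤ d r u := by
    obtain ⟨a, b, hab⟩ := Fintype.one_lt_card_iff.mp (by omega : 1 < Fintype.card V)
    rcases eq_or_ne a r with h | h
    · exact le_trans (hdr b (by rw [← h]; exact hab.symm)) (hu' b)
    · exact le_trans (hdr a h) (hu' a)
  have hur : u ≠ r := by
    intro h
    have h0 : d r r ≤ 0 := Nat.find_le (walk_refl R r)
    rw [h] at hdu
    omega
  -- the partner of u
  obtain ⟨w, hw0, hwn, harc⟩ := hspec r u
  refine ⟨u, w (d r u - 1), nonadj_symm ?_, ?_⟩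
  · have := harc (d r u - 1) (by omega)
    have h1 : d r u - 1 + 1 = d r u := by omega
    rw [h1, hwn] at this
    exact this
  · -- connectivity of the punctured nonadjacency graph
    have havoid : ∀ (a : V) (ha : a ≠ u),
        Relation.ReflTransGen (Nonadj (Dsub D u)) ⟨r, Ne.symm hur⟩ ⟨a, ha⟩ := by
      intro a ha
      obtain ⟨wa, hwa0, hwan, harca⟩ := hspec r a
      have hvals : ∀ i ≤ d r a, wa i ≠ u := by
        intro i hi
        rcases eq_or_lt_of_le hi with h | h
        · rw [h, hwan]; exact ha
        · intro hiu
          have hpre : Walk R r (wa i) i :=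
            ⟨wa, hwa0, rfl, fun k hk => harca k (by omega)⟩
          rw [hiu] at hpre
          have : d r u ≤ i := Nat.find_le hpre
          have : d r a ≤ d r u := hu' a
          omega
      have key := walk_sub (R := R) (u := u)
        (R' := Nonadj (Dsub D u))
        (fun x y hx hy hxy => ⟨fun h => hxy.1 (congrArg Subtype.val h), hxy.2.1, hxy.2.2⟩)
        (d r a) wa harca hvals
      have e1 : (⟨wa 0, hvals 0 (Nat.zero_le _)⟩ : {x : V // x ≠ u}) = ⟨r, Ne.symm hur⟩ :=
        Subtype.ext hwa0
      have e2 : (⟨wa (d r a), hvals _ le_rfl⟩ : {x : V // x ≠ u}) = ⟨a, ha⟩ :=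
        Subtype.ext hwan
      rw [e1, e2] at key
      exact key
    have hsymm : Symmetric (Relation.ReflTransGen (Nonadj (Dsub D u))) :=
      by
        haveI : Std.Symm (Nonadj (Dsub D u)) := ⟨fun a b h => ⟨h.1.symm, h.2.2, h.2.1⟩⟩
        exact fun _ _ h => Std.Symm.symm _ _ h
    intro a b
    exact (hsymm (havoid a.1 a.2)).trans (havoid b.1 b.2)
end Disconnect

lemma qt_sub {D : V → V → Prop} (hqt : QuasiTransitive D) (u : V) :
    QuasiTransitive (Dsub D u) := by
  intro x y z hxz h1 h2
  rcases hqt x.1 y.1 z.1 (fun h => hxz (Subtype.ext h)) h1 h2 with h | h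
  · exact Or.inl h
  · exact Or.inr h

universe u_v

lemma lemA : ∀ (n : ℕ) (W : Type u_v) [Fintype W] (D : W → W → Prop),
    Fintype.card W = n → QuasiTransitive D → Strong D → 2 ≤ Fintype.card W →
    ∃ a b : W, ¬ Relation.ReflTransGen (Nonadj D) a b := by
  intro n
  induction n using Nat.strong_induction_on with
  | _ n ih =>
    intro W _ D hcard hqt hs h2
    classical
    by_contra hcon
    push_neg at hcon
    have htot : ∀ a b : W, Relation.ReflTransGen (Nonadj D) a b := hcon
    obtain ⟨u, w', huw, htot'⟩ := reach_avoid htot h2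
    rcases eq_or_lt_of_le h2 with hc2 | hc3
    · -- exactly two vertices
      have hall : ∀ x : W, x = u ∨ x = w' := by
        intro x
        by_contra hx
        push_neg at hx
        have hcard3 : ({u, w', x} : Finset W).card = 3 := by
          rw [Finset.card_insert_of_notMem (by simp [huw.1, hx.1.symm, hx.2.symm]),
            Finset.card_insert_of_notMem (by simp [hx.2.symm]), Finset.card_singleton]
        have hle : 3 ≤ Fintype.card W := by
          rw [← hcard3, ← Finset.card_univ]
          exact Finset.card_le_univ _
        omega
      have hreach : ∀ y : W, Relation.ReflTransGen D u y → y = u := by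
        intro y hy
        induction hy with
        | refl => rfl
        | @tail c y hrc hcy ihc =>
          have hcu : c = u := ihc
          rw [hcu] at hcy
          rcases hall y with h | h
          · exact h
          · rw [h] at hcy; exact absurd hcy huw.2.1
      exact huw.1 (hreach w' (hs u w')).symm
    · -- at least three vertices: use induction on W minus u
      have hcards : Fintype.card {x : W // x ≠ u} = Fintype.card W - 1 := by
        have h3 : Fintype.card {x : W // x ≠ u} = Fintype.card {x : W // ¬ x = u} :=
          Fintype.card_congr (Equiv.subtypeEquivRight (fun x => Iff.rfl))
        rw [h3, Fintype.card_subtype_compl, Fintype.card_subtype_eq]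
      have hlt : Fintype.card {x : W // x ≠ u} < n := by omega
      have h2' : 2 ≤ Fintype.card {x : W // x ≠ u} := by omega
      obtain ⟨a, b, hab⟩ := ih _ hlt {x : W // x ≠ u} (Dsub D u) rfl
        (qt_sub hqt u) (strong_sub hqt hs huw) h2'
      exact hab (htot' a b)

section Assemble

variable {D : V → V → Prop}

lemma step_twin (hqt : QuasiTransitive D) {c c' y : V} (hcc' : Nonadj D c c')
    (h1 : D c y ∨ D y c) (h2 : D c' y ∨ D y c') :
    (D c y ↔ D c' y) ∧ (D y c ↔ D y c') := by
  obtain ⟨hne, ha, hb⟩ := hcc'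
  constructor
  · constructor
    · intro h
      rcases h2 with h' | h'
      · exact h'
      · rcases hqt c y c' hne h h' with hx | hx
        · exact absurd hx ha
        · exact absurd hx hb
    · intro h
      rcases h1 with h' | h'
      · exact h'
      · rcases hqt c' y c (Ne.symm hne) h h' with hx | hx
        · exact absurd hx hb
        · exact absurd hx ha
  · constructor
    · intro h
      rcases h2 with h' | h'
      · rcases hqt c' y c (Ne.symm hne) h' h with hx | hx
        · exact absurd hx hb
        · exact absurd hx ha
      · exact h'
    · intro h
      rcases h1 with h' | h'
      · rcases hqt c y c' hne h' h with hx | hx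
        · exact absurd hx ha
        · exact absurd hx hb
      · exact h'

lemma uniform (hqt : QuasiTransitive D) {x x' y : V}
    (hxx' : Relation.ReflTransGen (Nonadj D) x x')
    (hxy : ¬ Relation.ReflTransGen (Nonadj D) x y) :
    (D x y ↔ D x' y) ∧ (D y x ↔ D y x') := by
  induction hxx' with
  | refl => exact ⟨Iff.rfl, Iff.rfl⟩
  | @tail c c' hrc hcc' ihc =>
    have hyc : ¬ Relation.ReflTransGen (Nonadj D) c y := fun h => hxy (hrc.trans h)
    have hyc' : ¬ Relation.ReflTransGen (Nonadj D) c' y :=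
      fun h => hxy ((hrc.tail hcc').trans h)
    have hadjc : D c y ∨ D y c := by
      by_contra h
      push_neg at h
      rcases eq_or_ne c y with he | he
      · exact hyc (he ▸ Relation.ReflTransGen.refl)
      · exact hyc (Relation.ReflTransGen.single ⟨he, h.1, h.2⟩)
    have hadjc' : D c' y ∨ D y c' := by
      by_contra h
      push_neg at h
      rcases eq_or_ne c' y with he | he
      · exact hyc' (he ▸ Relation.ReflTransGen.refl)
      · exact hyc' (Relation.ReflTransGen.single ⟨he, h.1, h.2⟩)
    obtain ⟨s1, s2⟩ := step_twin hqt hcc' hadjc hadjc'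
    exact ⟨ihc.1.trans s1, ihc.2.trans s2⟩


/-- Every strong quasi-transitive digraph with at least two vertices is a
semicomplete composition `T[H_1,…,H_t]` with `t ≥ 2`, where each `H i` is a
single vertex or a non-strong quasi-transitive digraph. -/
theorem stmt14 [Fintype V] (D : V → V → Prop) (hqt : QuasiTransitive D)
    (hs : Strong D) (h2 : 2 ≤ Fintype.card V) :
    ∃ (t : ℕ) (_ : 2 ≤ t) (T : Fin t → Fin t → Prop) (n : Fin t → ℕ)
      (H : ∀ i : Fin t, Fin (n i) → Fin (n i) → Prop)
      (e : V ≃ (i : Fin t) × Fin (n i)),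
      Semicomplete T ∧
      (∀ i, n i = 1 ∨ (QuasiTransitive (H i) ∧ ¬ Strong (H i))) ∧
      ∀ x y, D x y ↔ CompArc T n H (e x) (e y) := by
  classical
  letI s : Setoid V := ⟨Relation.ReflTransGen (Nonadj D),
    ⟨fun _ => Relation.ReflTransGen.refl,
     fun h => by
       haveI : Std.Symm (Nonadj D) := ⟨fun _ _ h => nonadj_symm h⟩
       exact Std.Symm.symm _ _ h,
     fun h1 h2 => h1.trans h2⟩⟩
  set t := Fintype.card (Quotient s) with ht
  set eQ : Quotient s ≃ Fin t := Fintype.equivFin (Quotient s) with heQ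
  set f : V → Fin t := fun v => eQ (Quotient.mk s v) with hfdef
  have hkey : ∀ x y : V, f x = f y ↔ Relation.ReflTransGen (Nonadj D) x y := by
    intro x y
    rw [hfdef]
    simp only [EmbeddingLike.apply_eq_iff_eq]
    exact Quotient.eq (r := s)
  have hfsurj : Function.Surjective f := by
    intro i
    obtain ⟨q, hq⟩ := eQ.surjective i
    obtain ⟨v, hv⟩ := Quotient.exists_rep q
    refine ⟨v, ?_⟩
    show eQ ⟦v⟧ = i
    rw [hv, hq]
  set n : Fin t → ℕ := fun i => Fintype.card {v : V // f v = i} with hn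
  set eF : ∀ i, {v : V // f v = i} ≃ Fin (n i) := fun i => Fintype.equivFin _ with heF
  set e : V ≃ (i : Fin t) × Fin (n i) :=
    (Equiv.sigmaFiberEquiv f).symm.trans (Equiv.sigmaCongrRight eF) with he
  set g : ((i : Fin t) × Fin (n i)) → V := fun p => ((eF p.1).symm p.2).1 with hg
  have hge : ∀ x : V, g (e x) = x := by
    intro x
    simp [he, hg, Equiv.sigmaCongrRight, Equiv.sigmaFiberEquiv]
  have hfg : ∀ p : (i : Fin t) × Fin (n i), f (g p) = p.1 := fun p => ((eF p.1).symm p.2).2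
  set T : Fin t → Fin t → Prop :=
    fun i j => ∃ x y : V, f x = i ∧ f y = j ∧ D x y with hT
  set H : ∀ i : Fin t, Fin (n i) → Fin (n i) → Prop :=
    fun i a b => D ((eF i).symm a).1 ((eF i).symm b).1 with hH
  -- t ≥ 2
  have ht2 : 2 ≤ t := by
    obtain ⟨a, b, hab⟩ := lemA (Fintype.card V) V D rfl hqt hs h2
    have : f a ≠ f b := fun h => hab ((hkey a b).1 h)
    have h1 : 1 < Fintype.card (Fin t) := Fintype.one_lt_card_iff.mpr ⟨f a, f b, this⟩
    have h1' : 1 < t := by simpa using h1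
    omega
  refine ⟨t, ht2, T, n, H, e, ?_, ?_, ?_⟩
  · -- semicomplete
    intro i j hij
    obtain ⟨x, hx⟩ := hfsurj i
    obtain ⟨y, hy⟩ := hfsurj j
    have hnr : ¬ Relation.ReflTransGen (Nonadj D) x y := by
      intro h
      exact hij (by rw [← hx, ← hy]; exact (hkey x y).2 h)
    have hne : x ≠ y := fun h => hnr (h ▸ Relation.ReflTransGen.refl)
    have hadj : D x y ∨ D y x := by
      by_contra h
      push_neg at h
      exact hnr (Relation.ReflTransGen.single ⟨hne, h.1, h.2⟩)
    rcases hadj with h | h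
    · exact Or.inl ⟨x, y, hx, hy, h⟩
    · exact Or.inr ⟨y, x, hy, hx, h⟩
  · -- each part is a vertex or a non-strong QT digraph
    intro i
    rcases eq_or_ne (n i) 1 with h1 | h1
    · exact Or.inl h1
    · right
      have hinj : Function.Injective (fun a : Fin (n i) => ((eF i).symm a).1) :=
        fun a b h => by
          have := Subtype.ext h
          exact (eF i).symm.injective this
      constructor
      · intro a b c hac hD1 hD2
        rcases hqt _ _ _ (fun h => hac (hinj h)) hD1 hD2 with h | h
        · exact Or.inl h
        · exact Or.inr h
      · -- not strong
        intro hstrong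
        have hfib2 : 2 ≤ n i := by
          have hpos : 0 < n i := by
            obtain ⟨v, hv⟩ := hfsurj i
            rw [hn]
            exact Fintype.card_pos_iff.mpr ⟨⟨v, hv⟩⟩
          omega
        -- the induced digraph on the fiber is strong
        set DC : {v : V // f v = i} → {v : V // f v = i} → Prop :=
          fun a b => D a.1 b.1 with hDC
        have hDCstrong : Strong DC := by
          intro a b
          have h1' := hstrong (eF i a) (eF i b)
          have h2' := Relation.ReflTransGen.lift (p := DC) (fun p => (eF i).symm p)
            (fun p q hpq => hpq) _ _ h1'
          simpa [Function.onFun] using h2'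
        have hDCqt : QuasiTransitive DC := by
          intro a b c hac hD1 hD2
          rcases hqt a.1 b.1 c.1 (fun h => hac (Subtype.ext h)) hD1 hD2 with h | h
          · exact Or.inl h
          · exact Or.inr h
        obtain ⟨a, b, hab⟩ := lemA (n i) {v : V // f v = i} DC rfl hDCqt
          hDCstrong hfib2
        -- but a and b are Reach-connected inside the fiber
        apply hab
        have hr : Relation.ReflTransGen (Nonadj D) a.1 b.1 :=
          (hkey a.1 b.1).1 (by rw [a.2, b.2])
        -- transfer into the fiber
        have transfer : ∀ (z : V) (hz : f z = i),
            Relation.ReflTransGen (Nonadj D) a.1 z →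
            Relation.ReflTransGen (Nonadj DC) a ⟨z, hz⟩ := by
          intro z hz hzr
          induction hzr with
          | refl =>
            have : (⟨a.1, hz⟩ : {v : V // f v = i}) = a := Subtype.ext rfl
            rw [this]
          | @tail c c' hrc hcc' ihc =>
            have hc : f c = i := by
              rw [← a.2]
              exact ((hkey a.1 c).2 hrc).symm ▸ rfl
            exact (ihc hc).tail ⟨fun h => hcc'.1 (congrArg Subtype.val h),
              hcc'.2.1, hcc'.2.2⟩
        have := transfer b.1 b.2 hr
        simpa using this
  · -- the arc characterization
    have claim : ∀ p q : (i : Fin t) × Fin (n i), D (g p) (g q) ↔ CompArc T n H p q := by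
      rintro ⟨i, a⟩ ⟨j, b⟩
      rcases eq_or_ne i j with hij | hij
      · subst hij
        constructor
        · intro h
          exact Or.inl ⟨rfl, h⟩
        · rintro (⟨h, hh⟩ | ⟨hne, -⟩)
          · exact hh
          · exact absurd rfl hne
      · constructor
        · intro h
          exact Or.inr ⟨hij, g ⟨i, a⟩, g ⟨j, b⟩, hfg _, hfg _, h⟩
        · rintro (⟨h, -⟩ | ⟨-, x', y', hx', hy', hD⟩)
          · exact absurd h hij
          · -- uniformity
            set vx := g ⟨i, a⟩ with hvx
            set vy := g ⟨j, b⟩ with hvy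
            have hfx : f vx = i := hfg _
            have hfy : f vy = j := hfg _
            have hrx : Relation.ReflTransGen (Nonadj D) x' vx :=
              (hkey x' vx).1 (by rw [hx', hfx])
            have hry : Relation.ReflTransGen (Nonadj D) y' vy :=
              (hkey y' vy).1 (by rw [hy', hfy])
            have hnxy : ¬ Relation.ReflTransGen (Nonadj D) y' x' := by
              intro h
              have := (hkey y' x').2 h
              rw [hy', hx'] at this
              exact hij this.symm
            have step1 : D x' y' ↔ D x' vy := (uniform hqt hry hnxy).2
            have hnxy2 : ¬ Relation.ReflTransGen (Nonadj D) x' vy := by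
              intro h
              have := (hkey x' vy).2 h
              rw [hx', hfy] at this
              exact hij this
            have step2 : D x' vy ↔ D vx vy := (uniform hqt hrx hnxy2).1
            exact (step1.trans step2).1 hD
    intro x y
    have h1 := claim (e x) (e y)
    rw [hge x, hge y] at h1
    exact h1
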